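/- If c > a, d < b, and c + d < 0, then the set F = {(x,y,z) ∈ S² : z < (a+dx)/c} is invariant under V. -/
import Mathlib


open Filter Topology

noncomputable def V (a b c d : ℝ) (p : ℝ × ℝ × ℝ) : ℝ × ℝ × ℝ :=
  (p.1 * (1 - b + d * p.2.1),
   p.2.1 * (1 - a - d * p.1 + c * p.2.2),
   p.2.2 * (1 - c * p.2.1) + a * p.2.1 + b * p.1)

def S2 : Set (ℝ × ℝ × ℝ) :=
  {p | 0 ≤ p.1 ∧ 0 ≤ p.2.1 ∧ 0 ≤ p.2.2 ∧ p.1 + p.2.1 + p.2.2 = 1}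
theorem stmt18 (a b c d : ℝ) (ha0 : 0 ≤ a) (ha1 : a ≤ 1) (hb0 : 0 ≤ b) (hb1 : b ≤ 1)
    (hac : a < c) (hc : c ≤ 1 + a) (hd1 : -(1 - b) ≤ d) (hdb : d < b)
    (hcd : c + d < 0) (hcne : c ≠ 0) (hdne : d ≠ 0) :
    Set.MapsTo (V a b c d) {p ∈ S2 | p.2.2 < (a + d * p.1) / c}
      {p ∈ S2 | p.2.2 < (a + d * p.1) / c} := by
  rintro ⟨x, y, z⟩ ⟨⟨hx, hy, hz, hsum⟩, hlt⟩
  have hc0 : 0 < c := lt_of_le_of_lt ha0 hac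
  have hd0 : d < 0 := by linarith
  have hy1 : y ≤ 1 := by linarith
  have hx1 : x ≤ 1 := by linarith
  simp only [Set.mem_setOf_eq] at hlt
  rw [lt_div_iff₀ hc0] at hlt
  simp only [V, S2, Set.mem_setOf_eq, Set.mem_sep_iff]
  have hcy : 0 < 1 - c * y := by nlinarith
  refine ⟨⟨?_, ?_, ?_, by ring_nf; nlinarith⟩, ?_⟩
  · have : d ≤ d * y := by nlinarith
    nlinarith
  · nlinarith
  · nlinarith
  · rw [lt_div_iff₀ hc0]
    have h2 : (z * (1 - c * y)) * c < (a + d * x) * (1 - c * y) := by nlinarith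
    have hq : 0 ≤ b * x - d * x * y := by nlinarith [mul_nonneg hb0 hx, mul_nonneg hx hy]
    have h3 : (c + d) * (b * x - d * x * y) ≤ 0 :=
      mul_nonpos_of_nonpos_of_nonneg (le_of_lt hcd) hq
    nlinarith
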